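/- For each minimal nonface σ of Δ_{n,r-1} (a set of r pairwise crossing diagonals with all distances > r-1), the monomial ∏_{(i,j)∈σ} x_{ij} lies in the initial ideal in_≺(P_{n,r}), where ≺ is the reverse lexicographic order refining x_{ij} ≺ x_{kl} whenever d_{ij} < d_{kl}. Consequently I_{Δ_{n,r-1} * 2^{Θ_{n,r-1}}} ⊆ in_≺(P_{n,r}). -/

import Mathlib

open MvPolynomial

/-- Diagonals `(i,j)`, `i < j`, of the convex `n`-gon, indexing the variables `x_{ij}`. -/
abbrev Diag (n : ℕ) := {p : Fin n × Fin n // p.1 < p.2}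

/-- The cyclic distance `d_{ij} = min (j - i, n + i - j)` of a diagonal. -/
def dval (n : ℕ) (e : Diag n) : ℕ :=
  min ((e.1.2 : ℕ) - (e.1.1 : ℕ)) (n + (e.1.1 : ℕ) - (e.1.2 : ℕ))

/-- Two diagonals cross iff `a < c < b < d` or `c < a < d < b`. -/
def CrossD {n : ℕ} (e f : Diag n) : Prop :=
  (e.1.1 < f.1.1 ∧ f.1.1 < e.1.2 ∧ e.1.2 < f.1.2) ∨
  (f.1.1 < e.1.1 ∧ e.1.1 < f.1.2 ∧ f.1.2 < e.1.2)

/-- Reverse lexicographic comparison of monomials induced by a variable order `vo`. -/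
def RevLexLT {σ : Type*} (vo : σ → σ → Prop) (m m' : σ →₀ ℕ) : Prop :=
  ∃ v, m' v < m v ∧ ∀ w, vo w v → m w = m' w

/-- The (degree) reverse lexicographic term order induced by `vo`. -/
def TermLT {σ : Type*} (vo : σ → σ → Prop) (m m' : σ →₀ ℕ) : Prop :=
  (m.sum fun _ e => e) < (m'.sum fun _ e => e) ∨
    ((m.sum fun _ e => e) = (m'.sum fun _ e => e) ∧ RevLexLT vo m m')

/-- `m` is the leading monomial of `f` with respect to the term order induced by `vo`. -/
def IsLeadMon {σ : Type*} {k : Type*} [CommSemiring k] (vo : σ → σ → Prop)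
    (f : MvPolynomial σ k) (m : σ →₀ ℕ) : Prop :=
  m ∈ f.support ∧ ∀ m' ∈ f.support, m' ≠ m → TermLT vo m' m

set_option linter.unusedSectionVars false
set_option linter.unusedVariables false
set_option maxHeartbeats 1000000


section Order
variable {V : Type*} (vo : V → V → Prop)

lemma my_deg_add (m m' : V →₀ ℕ) :
    ((m + m').sum fun _ e => e) = (m.sum fun _ e => e) + (m'.sum fun _ e => e) :=
  Finsupp.sum_add_index' (fun _ => rfl) (fun _ _ _ => rfl)

/-- minimal element of a finite nonempty set w.r.t. a trichotomous transitive relation -/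
lemma exists_rel_min {α : Type*} (r : α → α → Prop)
    (htri : ∀ a b, a ≠ b → r a b ∨ r b a) (htrans : ∀ {a b c}, r a b → r b c → r a c)
    (s : Finset α) (hs : s.Nonempty) : ∃ v ∈ s, ∀ w ∈ s, w ≠ v → r v w := by
  classical
  induction s using Finset.induction_on with
  | empty => exact absurd hs (by simp)
  | @insert a s ha ih =>
    rcases s.eq_empty_or_nonempty with rfl | hne
    · exact ⟨a, by simp, by simp⟩
    · obtain ⟨v, hv, hmin⟩ := ih hne
      by_cases hav : a = v
      · refine ⟨v, by simp [hv], ?_⟩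
        intro w hw hwv
        rcases Finset.mem_insert.mp hw with rfl | hw
        · exact absurd hav hwv
        · exact hmin w hw hwv
      rcases htri a v hav with h | h
      · refine ⟨a, by simp, ?_⟩
        intro w hw hwa
        rcases Finset.mem_insert.mp hw with rfl | hw
        · exact absurd rfl hwa
        · by_cases hwv : w = v
          · exact hwv ▸ h
          · exact htrans h (hmin w hw hwv)
      · refine ⟨v, by simp [hv], ?_⟩
        intro w hw hwv
        rcases Finset.mem_insert.mp hw with rfl | hw
        · exact h
        · exact hmin w hw hwv

variable (hvo : IsStrictTotalOrder V vo)
include hvo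

lemma votrans {a b c : V} : vo a b → vo b c → vo a c := fun h h' => hvo.trans _ _ _ h h'

lemma termLT_irrefl (m : V →₀ ℕ) : ¬ TermLT vo m m := by
  rintro (h | ⟨-, v, hv, -⟩)
  · exact lt_irrefl _ h
  · exact lt_irrefl _ hv

lemma termLT_trans {m1 m2 m3 : V →₀ ℕ} (h12 : TermLT vo m1 m2) (h23 : TermLT vo m2 m3) :
    TermLT vo m1 m3 := by
  rcases h12 with h12 | ⟨e12, v, hv, hag⟩
  · rcases h23 with h23 | ⟨e23, _⟩
    · exact Or.inl (lt_trans h12 h23)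
    · exact Or.inl (e23 ▸ h12)
  · rcases h23 with h23 | ⟨e23, v', hv', hag'⟩
    · exact Or.inl (e12 ▸ h23)
    · refine Or.inr ⟨e12.trans e23, ?_⟩
      rcases @trichotomous_of _ vo hvo.toTrichotomous v v' with h | rfl | h
      · exact ⟨v, lt_of_le_of_lt (le_of_eq (hag' v h).symm) hv, fun w hw =>
          (hag w hw).trans (hag' w (votrans vo hvo hw h))⟩
      · exact ⟨v, lt_trans hv' hv, fun w hw => (hag w hw).trans (hag' w hw)⟩
      · exact ⟨v', lt_of_lt_of_le hv' (le_of_eq (hag v' h).symm), fun w hw =>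
          (hag w (votrans vo hvo hw h)).trans (hag' w hw)⟩

lemma termLT_trichot {m m' : V →₀ ℕ} (h : m ≠ m') : TermLT vo m m' ∨ TermLT vo m' m := by
  classical
  rcases lt_trichotomy (m.sum fun _ e => e) (m'.sum fun _ e => e) with hd | hd | hd
  · exact Or.inl (Or.inl hd)
  · -- equal degrees; find vo-min of difference set
    set D : Finset V := (m.support ∪ m'.support).filter (fun v => m v ≠ m' v) with hD
    have hDne : D.Nonempty := by
      rcases Finsupp.ne_iff.mp h with ⟨v, hv⟩
      refine ⟨v, Finset.mem_filter.mpr ⟨?_, hv⟩⟩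
      rcases em (m v = 0) with h0 | h0
      · exact Finset.mem_union_right _ (Finsupp.mem_support_iff.mpr (by omega))
      · exact Finset.mem_union_left _ (Finsupp.mem_support_iff.mpr h0)
    obtain ⟨v, hvD, hmin⟩ := exists_rel_min vo (fun a b hab =>
      (@trichotomous_of _ vo hvo.toTrichotomous a b).elim Or.inl (fun h => h.elim (fun h => absurd h hab) Or.inr))
      (fun h h' => votrans vo hvo h h') D hDne
    have hag : ∀ w, vo w v → m w = m' w := by
      intro w hw
      by_contra hne
      have hwD : w ∈ D := by
        refine Finset.mem_filter.mpr ⟨?_, hne⟩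
        rcases em (m w = 0) with h0 | h0
        · exact Finset.mem_union_right _ (Finsupp.mem_support_iff.mpr (by omega))
        · exact Finset.mem_union_left _ (Finsupp.mem_support_iff.mpr h0)
      have hwv : w ≠ v := fun hh => (hvo.irrefl v) (hh ▸ hw)
      exact (hvo.irrefl w) (votrans vo hvo hw (hmin w hwD hwv))
    have hvne : m v ≠ m' v := (Finset.mem_filter.mp hvD).2
    rcases lt_or_gt_of_ne hvne with hlt | hlt
    · exact Or.inr (Or.inr ⟨hd.symm, v, hlt, fun w hw => (hag w hw).symm⟩)
    · exact Or.inl (Or.inr ⟨hd, v, hlt, hag⟩)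
  · exact Or.inr (Or.inl hd)

lemma termLT_add_right {m1 m2 : V →₀ ℕ} (c : V →₀ ℕ) (h : TermLT vo m1 m2) :
    TermLT vo (m1 + c) (m2 + c) := by
  rcases h with h | ⟨e, v, hv, hag⟩
  · exact Or.inl (by rw [my_deg_add, my_deg_add]; omega)
  · refine Or.inr ⟨by rw [my_deg_add, my_deg_add, e], v, ?_, fun w hw => ?_⟩
    · simpa using hv
    · simp [hag w hw]

/-- combine:  a ≤ m, b ≤ m'  with one strict gives strict on sums -/
lemma termLT_add_combine {a b m m' : V →₀ ℕ}
    (ha : a = m ∨ TermLT vo a m) (hb : b = m' ∨ TermLT vo b m')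
    (hne : ¬(a = m ∧ b = m')) : TermLT vo (a + b) (m + m') := by
  rcases ha with rfl | ha
  · rcases hb with rfl | hb
    · exact absurd ⟨rfl, rfl⟩ hne
    · have := termLT_add_right vo hvo a hb
      rwa [add_comm b a, add_comm m' a] at this
  · rcases hb with rfl | hb
    · exact termLT_add_right vo hvo b ha
    · exact termLT_trans vo hvo (termLT_add_right vo hvo b ha)
        (by have := termLT_add_right vo hvo m hb; rwa [add_comm b m, add_comm m' m] at this)

end Order

section Lead
variable {V : Type*} {k : Type*} [CommRing k] [IsDomain k] (vo : V → V → Prop)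
  (hvo : IsStrictTotalOrder V vo)
include hvo

lemma exists_leadMon {f : MvPolynomial V k} (hf : f ≠ 0) : ∃ m, IsLeadMon vo f m := by
  have hne : f.support.Nonempty := MvPolynomial.support_nonempty.mpr hf
  obtain ⟨m, hm, hmax⟩ := exists_rel_min (fun a b => TermLT vo b a)
    (fun a b hab => ((termLT_trichot vo hvo hab).elim Or.inr Or.inl))
    (fun h h' => termLT_trans vo hvo h' h) f.support hne
  exact ⟨m, hm, fun m' hm' hne' => hmax m' hm' hne'⟩

lemma leadMon_unique {f : MvPolynomial V k} {m m' : V →₀ ℕ}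
    (h : IsLeadMon vo f m) (h' : IsLeadMon vo f m') : m = m' := by
  by_contra hne
  exact termLT_irrefl vo hvo m
    (termLT_trans vo hvo (h'.2 m h.1 hne) (h.2 m' h'.1 (Ne.symm hne)))

lemma leadMon_mul {f g : MvPolynomial V k} {m m' : V →₀ ℕ}
    (hf : IsLeadMon vo f m) (hg : IsLeadMon vo g m') : IsLeadMon vo (f * g) (m + m') := by
  classical
  have hlef : ∀ a ∈ f.support, a = m ∨ TermLT vo a m := fun a ha =>
    (em (a = m)).elim Or.inl (fun h => Or.inr (hf.2 a ha h))
  have hleg : ∀ b ∈ g.support, b = m' ∨ TermLT vo b m' := fun b hb =>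
    (em (b = m')).elim Or.inl (fun h => Or.inr (hg.2 b hb h))
  have key : MvPolynomial.coeff (m + m') (f * g) = f.coeff m * g.coeff m' := by
    rw [MvPolynomial.coeff_mul]
    refine Finset.sum_eq_single_of_mem (m, m') (Finset.HasAntidiagonal.mem_antidiagonal.mpr rfl) ?_
    intro b hb hne
    by_cases h1 : f.coeff b.1 = 0
    · simp [h1]
    by_cases h2 : g.coeff b.2 = 0
    · simp [h2]
    exfalso
    have hnand : ¬(b.1 = m ∧ b.2 = m') := fun ⟨x, y⟩ => hne (Prod.ext x y)
    have := termLT_add_combine vo hvo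
      (hlef b.1 (MvPolynomial.mem_support_iff.mpr h1))
      (hleg b.2 (MvPolynomial.mem_support_iff.mpr h2)) hnand
    rw [Finset.HasAntidiagonal.mem_antidiagonal.mp hb] at this
    exact termLT_irrefl vo hvo _ this
  constructor
  · rw [MvPolynomial.mem_support_iff, key]
    exact mul_ne_zero (MvPolynomial.mem_support_iff.mp hf.1)
      (MvPolynomial.mem_support_iff.mp hg.1)
  · intro m'' hm'' hne
    have hsub := MvPolynomial.support_mul f g hm''
    rw [Finset.mem_add] at hsub
    obtain ⟨a, ha, b, hb, rfl⟩ := hsub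
    exact termLT_add_combine vo hvo (hlef a ha) (hleg b hb)
      (fun ⟨h1, h2⟩ => hne (by rw [h1, h2]))

end Lead


/-- Over a field, the determinant of an alternating matrix is a square. -/
lemma alt_det_sq (F : Type*) [Field F] : ∀ (m : ℕ) (B : Matrix (Fin m) (Fin m) F),
    (∀ i j, B j i = - B i j) → (∀ i, B i i = 0) → ∃ c : F, B.det = c ^ 2 := by
  intro m
  induction m using Nat.strong_induction_on with
  | _ m IH =>
    intro B hskew hdiag
    by_cases hB : B = 0
    · rcases Nat.eq_zero_or_pos m with rfl | hm
      · exact ⟨1, by simp [Matrix.det_fin_zero]⟩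
      · haveI : Nonempty (Fin m) := ⟨⟨0, hm⟩⟩
        exact ⟨0, by simp [hB]⟩
    · -- find a nonzero off-diagonal entry
      have hex : ∃ i j, B i j ≠ 0 := by
        by_contra hc
        push_neg at hc
        exact hB (by ext i j; simp [hc])
      obtain ⟨i, j, hij⟩ := hex
      have hne : i ≠ j := fun h => hij (h ▸ hdiag i)
      have hm2 : 2 ≤ m := by
        rcases i with ⟨iv, hiv⟩; rcases j with ⟨jv, hjv⟩
        simp only [ne_eq, Fin.mk.injEq] at hne
        omega
      -- move the entry to position (0,1) by a permutation
      set i0 : Fin m := ⟨0, by omega⟩ with hi0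
      set i1 : Fin m := ⟨1, by omega⟩ with hi1
      have h01 : i0 ≠ i1 := by simp [hi0, hi1, Fin.ext_iff]
      set j' : Fin m := (Equiv.swap i0 i) j with hj'
      have hj'0 : j' ≠ i0 := by
        intro h
        apply hne
        have : (Equiv.swap i0 i) j = i0 := h
        have := (Equiv.swap i0 i).injective (a₁ := j) (a₂ := i) (by
          rw [this, Equiv.swap_apply_right])
        exact this.symm
      set e : Equiv.Perm (Fin m) := (Equiv.swap i1 j').trans (Equiv.swap i0 i) with he
      have he0 : e i0 = i := by
        simp [he, Equiv.trans_apply, Equiv.swap_apply_of_ne_of_ne h01 (Ne.symm hj'0),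
          Equiv.swap_apply_left]
      have he1 : e i1 = j := by
        simp only [he, Equiv.trans_apply, Equiv.swap_apply_left, hj']
        exact Equiv.swap_apply_self _ _ _
      set C := B.submatrix e e with hC
      have hdetC : C.det = B.det := Matrix.det_submatrix_equiv_self e B
      have hCskew : ∀ p q, C q p = - C p q := fun p q => hskew _ _
      have hCdiag : ∀ p, C p p = 0 := fun p => hdiag _
      have hC01 : C i0 i1 ≠ 0 := by simpa [hC, Matrix.submatrix_apply, he0, he1] using hij
      clear hij hne hj'0 he0 he1 hB
      obtain ⟨m'', rfl⟩ : ∃ m'', m = 2 + m'' := ⟨m - 2, by omega⟩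
      set ee := finSumFinEquiv (m := 2) (n := m'') with hee
      set D := C.submatrix ee ee with hD
      have hdetD : D.det = C.det := Matrix.det_submatrix_equiv_self ee C
      have heel0 : ee (Sum.inl 0) = i0 := by
        simp [hee, finSumFinEquiv, hi0, Fin.ext_iff]
      have heel1 : ee (Sum.inl 1) = i1 := by
        simp [hee, finSumFinEquiv, hi1, Fin.ext_iff]
      set α : F := C i0 i1 with hα
      set A₁ := D.toBlocks₁₁ with hA₁
      set B₁ := D.toBlocks₁₂ with hB₁
      set C₁ := D.toBlocks₂₁ with hC₁
      set D₁ := D.toBlocks₂₂ with hD₁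
      have hA1eq : A₁ = !![0, α; -α, 0] := by
        ext p q
        fin_cases p <;> fin_cases q <;>
          simp [hA₁, Matrix.toBlocks₁₁, hD, Matrix.submatrix_apply, heel0, heel1, hα,
            hCdiag, hCskew i0 i1]
      set Minv : Matrix (Fin 2) (Fin 2) F := !![0, -α⁻¹; α⁻¹, 0] with hMinv
      have hMA : Minv * A₁ = 1 := by
        rw [hA1eq]
        ext p q
        fin_cases p <;> fin_cases q <;>
          simp [hMinv, Matrix.mul_apply, Fin.sum_univ_two, Matrix.one_apply] <;>
          field_simp
      have hAM : A₁ * Minv = 1 := by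
        rw [hA1eq]
        ext p q
        fin_cases p <;> fin_cases q <;>
          simp [hMinv, Matrix.mul_apply, Fin.sum_univ_two, Matrix.one_apply] <;>
          field_simp
      haveI hInv : Invertible A₁ := ⟨Minv, hMA, hAM⟩
      have hinvOf : ⅟A₁ = Minv := invOf_eq_right_inv hAM
      set S := D₁ - C₁ * Minv * B₁ with hS
      have hdet1 : D.det = A₁.det * S.det := by
        have : D = Matrix.fromBlocks A₁ B₁ C₁ D₁ := (Matrix.fromBlocks_toBlocks D).symm
        rw [this, Matrix.det_fromBlocks₁₁, hinvOf]
      have hdetA1 : A₁.det = α ^ 2 := by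
        rw [hA1eq, Matrix.det_fin_two_of]; ring
      -- entrywise formula for S
      have hSentry : ∀ p q, S q p = C (ee (Sum.inr q)) (ee (Sum.inr p)) -
          α⁻¹ * (C (ee (Sum.inl 0)) (ee (Sum.inr q)) * C (ee (Sum.inl 1)) (ee (Sum.inr p)) -
            C (ee (Sum.inl 1)) (ee (Sum.inr q)) * C (ee (Sum.inl 0)) (ee (Sum.inr p))) := by
        intro p q
        have e1 : ∀ q k, C₁ q k = C (ee (Sum.inr q)) (ee (Sum.inl k)) := by
          intro q k; simp [hC₁, Matrix.toBlocks₂₁, hD, Matrix.submatrix_apply]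
        have e2 : ∀ k p, B₁ k p = C (ee (Sum.inl k)) (ee (Sum.inr p)) := by
          intro k p; simp [hB₁, Matrix.toBlocks₁₂, hD, Matrix.submatrix_apply]
        have e3 : D₁ q p = C (ee (Sum.inr q)) (ee (Sum.inr p)) := by
          simp [hD₁, Matrix.toBlocks₂₂, hD, Matrix.submatrix_apply]
        simp only [hS, Matrix.sub_apply, Matrix.mul_apply, Fin.sum_univ_two, e1, e2, e3,
          hMinv, Matrix.of_apply, Matrix.cons_val', Matrix.cons_val_zero, Matrix.cons_val_one,
          Matrix.head_cons, Matrix.empty_val', Matrix.cons_val_fin_one, Matrix.head_fin_const]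
        rw [hCskew (ee (Sum.inl 0)) (ee (Sum.inr q)), hCskew (ee (Sum.inl 1)) (ee (Sum.inr q))]
        ring
      have hSskew : ∀ p q, S q p = - S p q := by
        intro p q
        rw [hSentry p q, hSentry q p, hCskew (ee (Sum.inr q)) (ee (Sum.inr p))]
        ring
      have hSdiag : ∀ p, S p p = 0 := by
        intro p
        rw [hSentry p p, hCdiag]
        ring
      obtain ⟨c, hc⟩ := IH m'' (by omega) S hSskew hSdiag
      refine ⟨α * c, ?_⟩
      rw [← hdetC, ← hdetD, hdet1, hdetA1, hc]
      ring

/-- Over a UFD, the determinant of an alternating matrix is a square. -/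
lemma alt_det_sq_ufd {R : Type*} [CommRing R] [IsDomain R] [UniqueFactorizationMonoid R]
    (m : ℕ) (B : Matrix (Fin m) (Fin m) R)
    (hskew : ∀ i j, B j i = - B i j) (hdiag : ∀ i, B i i = 0) :
    ∃ p : R, p ^ 2 = B.det := by
  set F := FractionRing R
  set φ := algebraMap R F with hφ
  obtain ⟨c, hc⟩ := alt_det_sq F m (B.map φ)
    (fun i j => by simp [Matrix.map_apply, hskew i j])
    (fun i => by simp [Matrix.map_apply, hdiag i])
  have hc' : c ^ 2 = φ B.det := by
    rw [RingHom.map_det, RingHom.mapMatrix_apply, hc]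
  have hint : IsIntegral R c := by
    refine ⟨Polynomial.X ^ 2 - Polynomial.C B.det,
      Polynomial.monic_X_pow_sub_C B.det (by norm_num), ?_⟩
    simp only [Polynomial.eval₂_sub, Polynomial.eval₂_X_pow, Polynomial.eval₂_C]
    rw [hc']
    ring
  obtain ⟨p, hp⟩ := IsIntegrallyClosed.isIntegral_iff.mp hint
  refine ⟨p, IsFractionRing.injective R F ?_⟩
  rw [map_pow, hp, ← hφ, ← hc']

/-- the diagonal with endpoints `v w` (default `d0` if degenerate) -/
def edgD {n : ℕ} (d0 : Diag n) (v w : Fin n) : Diag n :=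
  if h : v < w then ⟨(v, w), h⟩ else if h' : w < v then ⟨(w, v), h'⟩ else d0

section Comb
variable {n : ℕ} (d0 : Diag n)

lemma edgD_symm (v w : Fin n) : edgD d0 v w = edgD d0 w v := by
  unfold edgD
  rcases lt_trichotomy v w with h | rfl | h
  · rw [dif_pos h, dif_neg (asymm h), dif_pos h]
  · simp
  · rw [dif_neg (asymm h), dif_pos h, dif_pos h]

lemma edgD_ends {v w : Fin n} (h : v ≠ w) :
    ((edgD d0 v w).1.1 = v ∧ (edgD d0 v w).1.2 = w) ∨
    ((edgD d0 v w).1.1 = w ∧ (edgD d0 v w).1.2 = v) := by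
  unfold edgD
  rcases lt_trichotomy v w with h' | h' | h'
  · rw [dif_pos h']; exact Or.inl ⟨rfl, rfl⟩
  · exact absurd h' h
  · rw [dif_neg (asymm h'), dif_pos h']; exact Or.inr ⟨rfl, rfl⟩

lemma edgD_eq_iff {v w : Fin n} (h : v ≠ w) (e : Diag n) :
    edgD d0 v w = e ↔ ((v = e.1.1 ∧ w = e.1.2) ∨ (v = e.1.2 ∧ w = e.1.1)) := by
  constructor
  · rintro rfl
    rcases edgD_ends d0 h with ⟨h1, h2⟩ | ⟨h1, h2⟩
    · exact Or.inl ⟨h1.symm, h2.symm⟩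
    · exact Or.inr ⟨h2.symm, h1.symm⟩
  · rintro (⟨rfl, rfl⟩ | ⟨rfl, rfl⟩)
    · unfold edgD
      rw [dif_pos e.2]
    · unfold edgD
      rw [dif_neg (asymm e.2), dif_pos e.2]

lemma dval_edgD_lt_inner {a b : ℕ} {v w : Fin n} (h : v ≠ w) (hab : a < b) (hbn : b < n)
    (hv1 : a ≤ v.val) (hv2 : v.val ≤ b) (hw1 : a < w.val) (hw2 : w.val < b) :
    dval n (edgD d0 v w) < b - a := by
  have hvw : v.val ≠ w.val := fun hh => h (Fin.ext hh)
  unfold edgD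
  rcases lt_trichotomy v w with h' | h' | h'
  · rw [dif_pos h']
    have := Fin.lt_def.mp h'
    show min (w.val - v.val) (n + v.val - w.val) < b - a
    omega
  · exact absurd h' h
  · rw [dif_neg (asymm h'), dif_pos h']
    have := Fin.lt_def.mp h'
    show min (v.val - w.val) (n + w.val - v.val) < b - a
    omega

lemma dval_edgD_lt_outer {a b : ℕ} {v w : Fin n} (h : v ≠ w) (hab : a < b) (hbn : b < n)
    (hv : v.val ≤ a ∨ b ≤ v.val) (hw : w.val < a ∨ b < w.val) :
    dval n (edgD d0 v w) < n + a - b := by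
  have hvw : v.val ≠ w.val := fun hh => h (Fin.ext hh)
  have hvn := v.isLt
  have hwn := w.isLt
  unfold edgD
  rcases lt_trichotomy v w with h' | h' | h'
  · rw [dif_pos h']
    have := Fin.lt_def.mp h'
    show min (w.val - v.val) (n + v.val - w.val) < n + a - b
    omega
  · exact absurd h' h
  · rw [dif_neg (asymm h'), dif_pos h']
    have := Fin.lt_def.mp h'
    show min (v.val - w.val) (n + w.val - v.val) < n + a - b
    omega

end Comb

section Sigma
variable {n : ℕ} (d0 : Diag n) (σ : Finset (Diag n))
  (hcross : (σ : Set (Diag n)).Pairwise CrossD)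

/-- the set of endpoints -/
def vertsD : Finset (Fin n) := σ.biUnion (fun e => {e.1.1, e.1.2})

lemma mem_vertsD {v : Fin n} :
    v ∈ vertsD σ ↔ ∃ e ∈ σ, v = e.1.1 ∨ v = e.1.2 := by
  unfold vertsD
  simp only [Finset.mem_biUnion, Finset.mem_insert, Finset.mem_singleton]

include hcross

/-- endpoints determine the diagonal of `σ` uniquely -/
lemma sig_unique {e f : Diag n} (he : e ∈ σ) (hf : f ∈ σ) (v : Fin n)
    (h1 : v = e.1.1 ∨ v = e.1.2) (h2 : v = f.1.1 ∨ v = f.1.2) : e = f := by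
  by_contra hne
  have hc := hcross he hf hne
  have he2 := Fin.lt_def.mp e.2
  have hf2 := Fin.lt_def.mp f.2
  have h1' : v.val = (e.1.1).val ∨ v.val = (e.1.2).val := by
    rcases h1 with rfl | rfl <;> simp
  have h2' : v.val = (f.1.1).val ∨ v.val = (f.1.2).val := by
    rcases h2 with rfl | rfl <;> simp
  rcases hc with ⟨x, y, z⟩ | ⟨x, y, z⟩ <;> rw [Fin.lt_def] at x y z <;> omega

lemma vertsD_card : (vertsD σ).card = 2 * σ.card := by
  classical
  rw [vertsD, Finset.card_biUnion]
  · rw [Finset.sum_congr rfl (fun e he => ?_), Finset.sum_const, smul_eq_mul, mul_comm]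
    rw [Finset.card_insert_of_notMem (by simp [ne_of_lt e.2, (ne_of_lt e.2).symm]),
      Finset.card_singleton]
  · intro e he f hf hne
    simp only [Finset.disjoint_left, Finset.mem_insert, Finset.mem_singleton]
    intro v hv1 hv2
    exact hne (sig_unique σ hcross he hf v hv1 hv2)

/-- partner of a vertex -/
noncomputable def prtD : Fin n → Fin n := fun v =>
  if h : ∃ e ∈ σ, v = e.1.1 ∨ v = e.1.2 then
    (if v = h.choose.1.1 then h.choose.1.2 else h.choose.1.1) else v

lemma prtD_spec {e : Diag n} (he : e ∈ σ) :
    prtD σ e.1.1 = e.1.2 ∧ prtD σ e.1.2 = e.1.1 := by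
  constructor
  · have h : ∃ f ∈ σ, e.1.1 = f.1.1 ∨ e.1.1 = f.1.2 := ⟨e, he, Or.inl rfl⟩
    rw [prtD, dif_pos h]
    obtain ⟨hmem, hor⟩ := h.choose_spec
    have : h.choose = e := sig_unique σ hcross hmem he _ (by tauto) (Or.inl rfl)
    rw [this, if_pos rfl]
  · have h : ∃ f ∈ σ, e.1.2 = f.1.1 ∨ e.1.2 = f.1.2 := ⟨e, he, Or.inr rfl⟩
    rw [prtD, dif_pos h]
    obtain ⟨hmem, hor⟩ := h.choose_spec
    have : h.choose = e := sig_unique σ hcross hmem he _ (by tauto) (Or.inr rfl)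
    rw [this, if_neg (by exact fun hh => absurd hh.symm (ne_of_lt e.2))]

lemma prtD_mem {v : Fin n} (hv : v ∈ vertsD σ) :
    ∃ e ∈ σ, (v = e.1.1 ∧ prtD σ v = e.1.2) ∨ (v = e.1.2 ∧ prtD σ v = e.1.1) := by
  obtain ⟨e, he, hor⟩ := (mem_vertsD σ).mp hv
  refine ⟨e, he, ?_⟩
  rcases hor with rfl | rfl
  · exact Or.inl ⟨rfl, (prtD_spec σ hcross he).1⟩
  · exact Or.inr ⟨rfl, (prtD_spec σ hcross he).2⟩

lemma prtD_mem_verts {v : Fin n} (hv : v ∈ vertsD σ) : prtD σ v ∈ vertsD σ := by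
  obtain ⟨e, he, h⟩ := prtD_mem σ hcross hv
  rcases h with ⟨-, h2⟩ | ⟨-, h2⟩ <;> exact (mem_vertsD σ).mpr ⟨e, he, by tauto⟩

lemma prtD_invol {v : Fin n} (hv : v ∈ vertsD σ) : prtD σ (prtD σ v) = v := by
  obtain ⟨e, he, h⟩ := prtD_mem σ hcross hv
  rcases h with ⟨h1, h2⟩ | ⟨h1, h2⟩ <;> rw [h2, h1]
  · exact (prtD_spec σ hcross he).2
  · exact (prtD_spec σ hcross he).1

lemma prtD_ne {v : Fin n} (hv : v ∈ vertsD σ) : prtD σ v ≠ v := by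
  obtain ⟨e, he, h⟩ := prtD_mem σ hcross hv
  rcases h with ⟨h1, h2⟩ | ⟨h1, h2⟩ <;> rw [h2, h1]
  · exact (ne_of_lt e.2).symm
  · exact ne_of_lt e.2

/-- the diagonal of `σ` through `v` is `edgD d0 v (prtD v)` -/
lemma edgD_prtD_mem {v : Fin n} (hv : v ∈ vertsD σ) :
    edgD d0 v (prtD σ v) ∈ σ := by
  obtain ⟨e, he, h⟩ := prtD_mem σ hcross hv
  have hne : v ≠ prtD σ v := fun hh => prtD_ne σ hcross hv hh.symm
  have : edgD d0 v (prtD σ v) = e := (edgD_eq_iff d0 hne e).mpr (by tauto)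
  rw [this]; exact he

lemma edgD_mem_sigma {x y : Fin n} (hxy : x ≠ y) (hmem : edgD d0 x y ∈ σ) :
    x ∈ vertsD σ ∧ prtD σ x = y := by
  set e := edgD d0 x y with hedef
  have hends := edgD_ends d0 hxy
  rw [← hedef] at hends
  have hx : x ∈ vertsD σ := (mem_vertsD σ).mpr ⟨e, hmem, by tauto⟩
  refine ⟨hx, ?_⟩
  rcases hends with ⟨h1, h2⟩ | ⟨h1, h2⟩
  · rw [← h1, (prtD_spec σ hcross hmem).1, h2]
  · rw [← h2, (prtD_spec σ hcross hmem).2, h1]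

end Sigma

section Side
variable {n : ℕ} (σ : Finset (Diag n))
  (hcross : (σ : Set (Diag n)).Pairwise CrossD)
include hcross

/-- endpoints of a diagonal of `σ` other than `u` lie on opposite sides of `u` -/
lemma side_prt {u : Diag n} (hu : u ∈ σ) {v : Fin n} (hv : v ∈ vertsD σ)
    (hva : v ≠ u.1.1) (hvb : v ≠ u.1.2) :
    ((u.1.1 : ℕ) < v.val ∧ v.val < (u.1.2 : ℕ) ∧
      ((prtD σ v).val < (u.1.1 : ℕ) ∨ (u.1.2 : ℕ) < (prtD σ v).val)) ∨
    ((v.val < (u.1.1 : ℕ) ∨ (u.1.2 : ℕ) < v.val) ∧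
      (u.1.1 : ℕ) < (prtD σ v).val ∧ (prtD σ v).val < (u.1.2 : ℕ)) := by
  obtain ⟨e, he, h⟩ := prtD_mem σ hcross hv
  have hne : e ≠ u := by
    rintro rfl
    rcases h with ⟨h1, -⟩ | ⟨h1, -⟩
    · exact hva h1
    · exact hvb h1
  have hc := hcross hu he (Ne.symm hne)
  have hva' : v.val ≠ (u.1.1 : ℕ) := fun hh => hva (Fin.ext hh)
  have hvb' : v.val ≠ (u.1.2 : ℕ) := fun hh => hvb (Fin.ext hh)
  rcases h with ⟨h1, h2⟩ | ⟨h1, h2⟩ <;>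
    have hv1 := congrArg Fin.val h1 <;>
    have hv2 := congrArg Fin.val h2 <;>
    rcases hc with ⟨x, y, z⟩ | ⟨x, y, z⟩ <;>
    rw [Fin.lt_def] at x y z <;>
    omega

omit hcross in
lemma jD_surj {r : ℕ} (hV : (vertsD σ).card = r) {v : Fin n} (hv : v ∈ vertsD σ) :
    ∃ i, (vertsD σ).orderEmbOfFin hV i = v := by
  have hrange := Finset.range_orderEmbOfFin (vertsD σ) hV
  have : v ∈ Set.range ((vertsD σ).orderEmbOfFin hV) := by rw [hrange]; exact_mod_cast hv
  exact this

end Side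

lemma dval_val {n : ℕ} {u : Diag n} :
    dval n u = min ((u.1.2 : ℕ) - (u.1.1 : ℕ)) (n + (u.1.1 : ℕ) - (u.1.2 : ℕ)) := rfl

/-- Claim A : if `π` does not swap the endpoints of `u ∈ σ`, then some `π`-edge
is outside `σ` and strictly shorter than `u`. -/
lemma claimA {n r : ℕ} (d0 : Diag n) (σ : Finset (Diag n))
    (hcross : (σ : Set (Diag n)).Pairwise CrossD) {u : Diag n} (hu : u ∈ σ)
    (hV : (vertsD σ).card = 2 * r) (π : Equiv.Perm (Fin (2 * r))) (hfpf : ∀ i, π i ≠ i)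
    (hb : ∀ ia ib, (vertsD σ).orderEmbOfFin hV ia = u.1.1 →
      (vertsD σ).orderEmbOfFin hV ib = u.1.2 → ¬(π ia = ib ∧ π ib = ia)) :
    ∃ i, edgD d0 ((vertsD σ).orderEmbOfFin hV (π i)) ((vertsD σ).orderEmbOfFin hV i) ∉ σ ∧
      dval n (edgD d0 ((vertsD σ).orderEmbOfFin hV (π i)) ((vertsD σ).orderEmbOfFin hV i))
        < dval n u := by
  classical
  by_contra hcon
  push_neg at hcon
  set j : Fin (2 * r) → Fin n := fun i => (vertsD σ).orderEmbOfFin hV i with hj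
  have hjmem : ∀ i, j i ∈ vertsD σ := fun i => Finset.orderEmbOfFin_mem _ hV i
  have hjinj : Function.Injective j := fun i i' hh => by
    exact ((vertsD σ).orderEmbOfFin hV).injective hh
  have hjne : ∀ i, j (π i) ≠ j i := fun i hh => hfpf i (hjinj hh)
  obtain ⟨ia, hia⟩ := jD_surj σ hV ((mem_vertsD σ).mpr ⟨u, hu, Or.inl rfl⟩)
  obtain ⟨ib, hib⟩ := jD_surj σ hV ((mem_vertsD σ).mpr ⟨u, hu, Or.inr rfl⟩)
  have hab : (u.1.1 : ℕ) < (u.1.2 : ℕ) := Fin.lt_def.mp u.2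
  have hbn : (u.1.2 : ℕ) < n := (u.1.2).isLt
  have hprt_a : prtD σ u.1.1 = u.1.2 := (prtD_spec σ hcross hu).1
  have hprt_b : prtD σ u.1.2 = u.1.1 := (prtD_spec σ hcross hu).2
  -- the index-level partner involution
  have hex : ∀ i, ∃ i', j i' = prtD σ (j i) :=
    fun i => jD_surj σ hV (prtD_mem_verts σ hcross (hjmem i))
  choose p0 hp0 using hex
  have hp0invol : ∀ i, p0 (p0 i) = i := by
    intro i
    apply hjinj
    rw [hp0, hp0, prtD_invol σ hcross (hjmem i)]
  set Pin := Finset.univ.filter (fun i => (u.1.1 : ℕ) < (j i).val ∧ (j i).val < (u.1.2 : ℕ))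
    with hPin
  set Pout := Finset.univ.filter (fun i => (j i).val < (u.1.1 : ℕ) ∨ (u.1.2 : ℕ) < (j i).val)
    with hPout
  have hp0in : ∀ i ∈ Pin, p0 i ∈ Pout := by
    intro i hi
    rw [hPin, Finset.mem_filter] at hi
    have hside := side_prt σ hcross hu (hjmem i)
      (fun hh => by have := congrArg Fin.val hh; omega)
      (fun hh => by have := congrArg Fin.val hh; omega)
    rw [hPout, Finset.mem_filter]
    refine ⟨Finset.mem_univ _, ?_⟩
    rw [hp0 i]
    rcases hside with ⟨-, -, hh⟩ | ⟨hh, -⟩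
    · exact hh
    · omega
  have hp0out : ∀ i ∈ Pout, p0 i ∈ Pin := by
    intro i hi
    rw [hPout, Finset.mem_filter] at hi
    have hside := side_prt σ hcross hu (hjmem i)
      (fun hh => by have := congrArg Fin.val hh; omega)
      (fun hh => by have := congrArg Fin.val hh; omega)
    rw [hPin, Finset.mem_filter]
    refine ⟨Finset.mem_univ _, ?_⟩
    rw [hp0 i]
    rcases hside with ⟨h1, h2, -⟩ | ⟨-, hh⟩
    · omega
    · exact hh
  have hcards : Pin.card = Pout.card :=
    Finset.card_bij' (fun i _ => p0 i) (fun i _ => p0 i) hp0in hp0out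
      (fun i _ => hp0invol i) (fun i _ => hp0invol i)
  have hiaj : j ia = u.1.1 := hia
  have hibj : j ib = u.1.2 := hib
  have hconj : ∀ i, edgD d0 (j (π i)) (j i) ∉ σ →
      dval n u ≤ dval n (edgD d0 (j (π i)) (j i)) := hcon
  have hvala := congrArg Fin.val hiaj
  have hvalb := congrArg Fin.val hibj
  by_cases hshort : (u.1.2 : ℕ) - (u.1.1 : ℕ) ≤ n + (u.1.1 : ℕ) - (u.1.2 : ℕ)
  · -- inner arc is the short one
    have hdu : dval n u = (u.1.2 : ℕ) - (u.1.1 : ℕ) := by rw [dval_val]; omega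
    have hstep1 : ∀ i ∈ Pin, π i ∈ Pout := by
      intro i hi
      rw [hPin, Finset.mem_filter] at hi
      obtain ⟨-, hi1, hi2⟩ := hi
      rw [hPout, Finset.mem_filter]
      refine ⟨Finset.mem_univ _, ?_⟩
      by_contra hOy
      push_neg at hOy
      obtain ⟨hy1, hy2⟩ := hOy
      have hlt : dval n (edgD d0 (j (π i)) (j i)) < dval n u := by
        rw [hdu]
        exact dval_edgD_lt_inner d0 (hjne i) hab hbn hy1 hy2 hi1 hi2
      have hnm : edgD d0 (j (π i)) (j i) ∉ σ := by
        intro hmem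
        rw [edgD_symm] at hmem
        have hpe := (edgD_mem_sigma d0 σ hcross (Ne.symm (hjne i)) hmem).2
        have hside := side_prt σ hcross hu (hjmem i)
          (fun hh => by have := congrArg Fin.val hh; omega)
          (fun hh => by have := congrArg Fin.val hh; omega)
        rw [hpe] at hside
        rcases hside with ⟨-, -, hh⟩ | ⟨hh, -, -⟩ <;> omega
      exact absurd hlt (not_lt.mpr (hconj i hnm))
    have himg : Pin.image π = Pout := by
      apply Finset.eq_of_subset_of_card_le
      · intro x hx
        obtain ⟨i, hi, rfl⟩ := Finset.mem_image.mp hx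
        exact hstep1 i hi
      · rw [Finset.card_image_of_injective _ π.injective, hcards]
    have hpia : π ia = ib := by
      by_cases hyInn : (u.1.1 : ℕ) < (j (π ia)).val ∧ (j (π ia)).val < (u.1.2 : ℕ)
      · exfalso
        have hlt : dval n (edgD d0 (j (π ia)) (j ia)) < dval n u := by
          rw [hdu, edgD_symm]
          exact dval_edgD_lt_inner d0 (Ne.symm (hjne ia)) hab hbn
            (by omega) (by omega) hyInn.1 hyInn.2
        have hnm : edgD d0 (j (π ia)) (j ia) ∉ σ := by
          intro hmem
          rw [edgD_symm] at hmem
          have hpe := (edgD_mem_sigma d0 σ hcross (Ne.symm (hjne ia)) hmem).2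
          rw [hiaj, hprt_a] at hpe
          have := congrArg Fin.val hpe
          omega
        exact absurd hlt (not_lt.mpr (hconj ia hnm))
      · by_cases hyOut : (j (π ia)).val < (u.1.1 : ℕ) ∨ (u.1.2 : ℕ) < (j (π ia)).val
        · exfalso
          have : π ia ∈ Pout := by
            rw [hPout, Finset.mem_filter]
            exact ⟨Finset.mem_univ _, hyOut⟩
          rw [← himg] at this
          obtain ⟨i, hi, hπ⟩ := Finset.mem_image.mp this
          have : i = ia := π.injective hπ
          subst this
          rw [hPin, Finset.mem_filter] at hi
          omega
        · apply hjinj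
          rw [hibj]
          apply Fin.ext
          have := (hjne ia)
          have hne' : (j (π ia)).val ≠ (u.1.1 : ℕ) := by
            intro hh
            exact (hjne ia) (by rw [hiaj]; exact Fin.ext (by omega))
          have hbd := (j (π ia)).isLt
          omega
    have hpib : π ib = ia := by
      by_cases hyInn : (u.1.1 : ℕ) < (j (π ib)).val ∧ (j (π ib)).val < (u.1.2 : ℕ)
      · exfalso
        have hlt : dval n (edgD d0 (j (π ib)) (j ib)) < dval n u := by
          rw [hdu, edgD_symm]
          exact dval_edgD_lt_inner d0 (Ne.symm (hjne ib)) hab hbn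
            (by omega) (by omega) hyInn.1 hyInn.2
        have hnm : edgD d0 (j (π ib)) (j ib) ∉ σ := by
          intro hmem
          rw [edgD_symm] at hmem
          have hpe := (edgD_mem_sigma d0 σ hcross (Ne.symm (hjne ib)) hmem).2
          rw [hibj, hprt_b] at hpe
          have := congrArg Fin.val hpe
          omega
        exact absurd hlt (not_lt.mpr (hconj ib hnm))
      · by_cases hyOut : (j (π ib)).val < (u.1.1 : ℕ) ∨ (u.1.2 : ℕ) < (j (π ib)).val
        · exfalso
          have : π ib ∈ Pout := by
            rw [hPout, Finset.mem_filter]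
            exact ⟨Finset.mem_univ _, hyOut⟩
          rw [← himg] at this
          obtain ⟨i, hi, hπ⟩ := Finset.mem_image.mp this
          have : i = ib := π.injective hπ
          subst this
          rw [hPin, Finset.mem_filter] at hi
          omega
        · apply hjinj
          rw [hiaj]
          apply Fin.ext
          have hne' : (j (π ib)).val ≠ (u.1.2 : ℕ) := by
            intro hh
            exact (hjne ib) (by rw [hibj]; exact Fin.ext (by omega))
          have hbd := (j (π ib)).isLt
          omega
    exact hb ia ib hia hib ⟨hpia, hpib⟩
  · -- outer arc is the short one
    have hdu : dval n u = n + (u.1.1 : ℕ) - (u.1.2 : ℕ) := by rw [dval_val]; omega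
    have hstep1 : ∀ i ∈ Pout, π i ∈ Pin := by
      intro i hi
      rw [hPout, Finset.mem_filter] at hi
      obtain ⟨-, hi1⟩ := hi
      rw [hPin, Finset.mem_filter]
      refine ⟨Finset.mem_univ _, ?_⟩
      by_contra hIy
      have hw : (j (π i)).val ≤ (u.1.1 : ℕ) ∨ (u.1.2 : ℕ) ≤ (j (π i)).val := by omega
      have hlt : dval n (edgD d0 (j (π i)) (j i)) < dval n u := by
        rw [hdu]
        exact dval_edgD_lt_outer d0 (hjne i) hab hbn hw hi1
      have hnm : edgD d0 (j (π i)) (j i) ∉ σ := by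
        intro hmem
        rw [edgD_symm] at hmem
        have hpe := (edgD_mem_sigma d0 σ hcross (Ne.symm (hjne i)) hmem).2
        have hside := side_prt σ hcross hu (hjmem i)
          (fun hh => by have := congrArg Fin.val hh; omega)
          (fun hh => by have := congrArg Fin.val hh; omega)
        rw [hpe] at hside
        rcases hside with ⟨h1, h2, -⟩ | ⟨-, h1, h2⟩ <;> omega
      exact absurd hlt (not_lt.mpr (hconj i hnm))
    have himg : Pout.image π = Pin := by
      apply Finset.eq_of_subset_of_card_le
      · intro x hx
        obtain ⟨i, hi, rfl⟩ := Finset.mem_image.mp hx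
        exact hstep1 i hi
      · rw [Finset.card_image_of_injective _ π.injective, hcards]
    have hpia : π ia = ib := by
      by_cases hyOut : (j (π ia)).val < (u.1.1 : ℕ) ∨ (u.1.2 : ℕ) < (j (π ia)).val
      · exfalso
        have hlt : dval n (edgD d0 (j (π ia)) (j ia)) < dval n u := by
          rw [hdu, edgD_symm]
          exact dval_edgD_lt_outer d0 (Ne.symm (hjne ia)) hab hbn (by omega) hyOut
        have hnm : edgD d0 (j (π ia)) (j ia) ∉ σ := by
          intro hmem
          rw [edgD_symm] at hmem
          have hpe := (edgD_mem_sigma d0 σ hcross (Ne.symm (hjne ia)) hmem).2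
          rw [hiaj, hprt_a] at hpe
          have := congrArg Fin.val hpe
          omega
        exact absurd hlt (not_lt.mpr (hconj ia hnm))
      · by_cases hyInn : (u.1.1 : ℕ) < (j (π ia)).val ∧ (j (π ia)).val < (u.1.2 : ℕ)
        · exfalso
          have : π ia ∈ Pin := by
            rw [hPin, Finset.mem_filter]
            exact ⟨Finset.mem_univ _, hyInn⟩
          rw [← himg] at this
          obtain ⟨i, hi, hπ⟩ := Finset.mem_image.mp this
          have : i = ia := π.injective hπ
          subst this
          rw [hPout, Finset.mem_filter] at hi
          omega
        · apply hjinj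
          rw [hibj]
          apply Fin.ext
          have hne' : (j (π ia)).val ≠ (u.1.1 : ℕ) := by
            intro hh
            exact (hjne ia) (by rw [hiaj]; exact Fin.ext (by omega))
          have hbd := (j (π ia)).isLt
          omega
    have hpib : π ib = ia := by
      by_cases hyOut : (j (π ib)).val < (u.1.1 : ℕ) ∨ (u.1.2 : ℕ) < (j (π ib)).val
      · exfalso
        have hlt : dval n (edgD d0 (j (π ib)) (j ib)) < dval n u := by
          rw [hdu, edgD_symm]
          exact dval_edgD_lt_outer d0 (Ne.symm (hjne ib)) hab hbn (by omega) hyOut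
        have hnm : edgD d0 (j (π ib)) (j ib) ∉ σ := by
          intro hmem
          rw [edgD_symm] at hmem
          have hpe := (edgD_mem_sigma d0 σ hcross (Ne.symm (hjne ib)) hmem).2
          rw [hibj, hprt_b] at hpe
          have := congrArg Fin.val hpe
          omega
        exact absurd hlt (not_lt.mpr (hconj ib hnm))
      · by_cases hyInn : (u.1.1 : ℕ) < (j (π ib)).val ∧ (j (π ib)).val < (u.1.2 : ℕ)
        · exfalso
          have : π ib ∈ Pin := by
            rw [hPin, Finset.mem_filter]
            exact ⟨Finset.mem_univ _, hyInn⟩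
          rw [← himg] at this
          obtain ⟨i, hi, hπ⟩ := Finset.mem_image.mp this
          have : i = ib := π.injective hπ
          subst this
          rw [hPout, Finset.mem_filter] at hi
          omega
        · apply hjinj
          rw [hiaj]
          apply Fin.ext
          have hne' : (j (π ib)).val ≠ (u.1.2 : ℕ) := by
            intro hh
            exact (hjne ib) (by rw [hibj]; exact Fin.ext (by omega))
          have hbd := (j (π ib)).isLt
          omega
    exact hb ia ib hia hib ⟨hpia, hpib⟩


section Helpers
variable {k : Type*} [CommSemiring k] {V : Type*} {ι : Type*}

lemma prod_X_eq (s : Finset ι) (g : ι → V) :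
    (∏ i ∈ s, (X (g i) : MvPolynomial V k)) =
      monomial (∑ i ∈ s, Finsupp.single (g i) 1) 1 := by
  classical
  induction s using Finset.cons_induction with
  | empty => simp
  | cons a s ha ih =>
    rw [Finset.prod_cons, Finset.sum_cons, ih, X, monomial_mul, one_mul]

lemma my_deg_finsetsum (s : Finset ι) (f : ι → (V →₀ ℕ)) :
    ((∑ i ∈ s, f i).sum fun _ e => e) = ∑ i ∈ s, ((f i).sum fun _ e => e) := by
  classical
  induction s using Finset.cons_induction with
  | empty => simp
  | cons a s ha ih => rw [Finset.sum_cons, Finset.sum_cons, my_deg_add, ih]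

lemma my_deg_single (v : V) (c : ℕ) : ((Finsupp.single v c).sum fun _ e => e) = c := by
  classical
  rw [Finsupp.sum_single_index]
  rfl

lemma finsupp_sum_single_apply [DecidableEq V] (s : Finset ι) (g : ι → V) (c : ℕ) (u : V) :
    (∑ i ∈ s, Finsupp.single (g i) c) u = (s.filter (fun i => g i = u)).card * c := by
  classical
  rw [Finset.sum_apply']
  rw [Finset.sum_congr rfl (fun i _ => Finsupp.single_apply)]
  rw [Finset.sum_ite, Finset.sum_const, Finset.sum_const_zero, add_zero, smul_eq_mul]

lemma finsupp_sum_single_self_apply [DecidableEq V] (s : Finset V) (c : ℕ) (u : V) :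
    (∑ e ∈ s, Finsupp.single e c) u = if u ∈ s then c else 0 := by
  classical
  rw [finsupp_sum_single_apply]
  rw [Finset.filter_eq']
  split <;> simp

end Helpers

theorem pfaff_lead (k : Type) [Field k] {n r : ℕ} (hr : 1 ≤ r) (hrn : 2 * r ≤ n)
    (vo : Diag n → Diag n → Prop) (hvo : IsStrictTotalOrder (Diag n) vo)
    (hcompat : ∀ e f : Diag n, dval n e < dval n f → vo e f)
    (A : Matrix (Fin n) (Fin n) (MvPolynomial (Diag n) k))
    (hA : ∀ i j : Fin n, A i j = if h : i < j then X ⟨(i, j), h⟩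
      else if h' : j < i then - X ⟨(j, i), h'⟩ else 0)
    (σ : Finset (Diag n)) (hcard : σ.card = r)
    (hcross : (σ : Set (Diag n)).Pairwise CrossD) :
    ∃ jj : Fin (2 * r) → Fin n, StrictMono jj ∧
      IsLeadMon vo (A.submatrix jj jj).det (∑ e ∈ σ, Finsupp.single e 2) := by
  classical
  have hn2 : 2 ≤ n := le_trans (by omega) hrn
  have hd0lt : (⟨0, by omega⟩ : Fin n) < (⟨1, by omega⟩ : Fin n) := by
    rw [Fin.lt_def]; norm_num
  set d0 : Diag n := ⟨(⟨0, by omega⟩, ⟨1, by omega⟩), hd0lt⟩ with hd0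
  have hV : (vertsD σ).card = 2 * r := by rw [vertsD_card σ hcross, hcard]
  set jj : Fin (2 * r) → Fin n := fun i => (vertsD σ).orderEmbOfFin hV i with hjj
  have hjmono : StrictMono jj := fun x y hxy => ((vertsD σ).orderEmbOfFin hV).strictMono hxy
  have hjinj := hjmono.injective
  have hjmem : ∀ i, jj i ∈ vertsD σ := fun i => Finset.orderEmbOfFin_mem _ hV i
  refine ⟨jj, hjmono, ?_⟩
  -- matrix entries
  have hAdiag : ∀ v : Fin n, A v v = 0 := fun v => by
    rw [hA]
    rw [dif_neg (lt_irrefl v), dif_neg (lt_irrefl v)]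
  have hAentry : ∀ v w : Fin n, v ≠ w → ∃ ε : k, (ε = 1 ∨ ε = -1) ∧
      A v w = MvPolynomial.C ε * X (edgD d0 v w) := by
    intro v w hvw
    rcases lt_trichotomy v w with h | h | h
    · refine ⟨1, Or.inl rfl, ?_⟩
      rw [hA, dif_pos h, edgD, dif_pos h]
      simp
    · exact absurd h hvw
    · refine ⟨-1, Or.inr rfl, ?_⟩
      rw [hA, dif_neg (asymm h), dif_pos h, edgD, dif_neg (asymm h), dif_pos h]
      simp
  -- the term of a fixed-point-free permutation
  have hterm : ∀ π : Equiv.Perm (Fin (2 * r)), (∀ i, π i ≠ i) → ∃ ε : k,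
      (ε = 1 ∨ ε = -1) ∧ (∏ i, (A.submatrix jj jj) (π i) i) =
        MvPolynomial.C ε *
          monomial (∑ i, Finsupp.single (edgD d0 (jj (π i)) (jj i)) 1) 1 := by
    intro π hfpf
    have hch : ∀ i, ∃ ε : k, (ε = 1 ∨ ε = -1) ∧
        A (jj (π i)) (jj i) = MvPolynomial.C ε * X (edgD d0 (jj (π i)) (jj i)) :=
      fun i => hAentry _ _ (fun hh => hfpf i (hjinj hh))
    choose ε hε1 hε2 using hch
    refine ⟨∏ i, ε i, ?_, ?_⟩
    · refine Finset.prod_induction ε (fun x => x = 1 ∨ x = -1) ?_ (Or.inl rfl)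
        (fun i _ => hε1 i)
      rintro a b (rfl | rfl) (rfl | rfl) <;> norm_num
    · have hε2' : ∀ i, (A.submatrix jj jj) (π i) i =
          MvPolynomial.C (ε i) * X (edgD d0 (jj (π i)) (jj i)) := hε2
      rw [Finset.prod_congr rfl (fun i _ => hε2' i)]
      rw [Finset.prod_mul_distrib, ← map_prod, prod_X_eq]
  have hfixzero : ∀ π : Equiv.Perm (Fin (2 * r)), (∃ i, π i = i) →
      (∏ i, (A.submatrix jj jj) (π i) i) = 0 := by
    rintro π ⟨i, hi⟩
    refine Finset.prod_eq_zero (Finset.mem_univ i) ?_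
    rw [Matrix.submatrix_apply, hi, hAdiag]
  -- the crossing involution
  have hex : ∀ i, ∃ i', jj i' = prtD σ (jj i) :=
    fun i => jD_surj σ hV (prtD_mem_verts σ hcross (hjmem i))
  choose p0 hp0 using hex
  have hp0invol : Function.Involutive p0 := by
    intro i
    apply hjinj
    rw [hp0, hp0, prtD_invol σ hcross (hjmem i)]
  set π₀ : Equiv.Perm (Fin (2 * r)) := ⟨p0, p0, hp0invol, hp0invol⟩ with hπ₀
  have hπ₀app : ∀ i, π₀ i = p0 i := fun i => rfl
  have hfpf0 : ∀ i, π₀ i ≠ i := by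
    intro i hh
    have h2 : jj (π₀ i) = jj i := by rw [hh]
    rw [hπ₀app, hp0] at h2
    exact prtD_ne σ hcross (hjmem i) h2
  have hE0 : ∀ i, edgD d0 (jj (π₀ i)) (jj i) = edgD d0 (jj i) (prtD σ (jj i)) := by
    intro i
    rw [hπ₀app, hp0, edgD_symm]
  -- the monomial of the crossing involution
  have h0 : (∑ i, Finsupp.single (edgD d0 (jj (π₀ i)) (jj i)) 1) =
      ∑ e ∈ σ, Finsupp.single e 2 := by
    rw [Finset.sum_congr rfl (fun i _ => by rw [hE0 i])]
    have hbij : (∑ i : Fin (2 * r), Finsupp.single (edgD d0 (jj i) (prtD σ (jj i))) 1) =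
        ∑ v ∈ vertsD σ, Finsupp.single (edgD d0 v (prtD σ v)) 1 :=
      Finset.sum_bij (fun (i : Fin (2 * r)) _ => jj i)
        (fun i _ => hjmem i) (fun i _ i' _ hh => hjinj hh)
        (fun v hv => by
          obtain ⟨i, hi⟩ := jD_surj σ hV hv
          exact ⟨i, Finset.mem_univ i, hi ▸ rfl⟩)
        (fun i _ => rfl)
    rw [hbij]
    rw [vertsD, Finset.sum_biUnion ?disj]
    case disj =>
      intro e he f hf hne
      simp only [Finset.disjoint_left, Finset.mem_insert, Finset.mem_singleton]
      intro v hv1 hv2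
      exact hne (sig_unique σ hcross he hf v hv1 hv2)
    refine Finset.sum_congr rfl (fun e he => ?_)
    have hne12 : e.1.1 ≠ e.1.2 := ne_of_lt e.2
    rw [Finset.sum_insert (by simpa using hne12), Finset.sum_singleton]
    have hs1 : edgD d0 e.1.1 (prtD σ e.1.1) = e := by
      rw [(prtD_spec σ hcross he).1]
      exact (edgD_eq_iff d0 hne12 e).mpr (Or.inl ⟨rfl, rfl⟩)
    have hs2 : edgD d0 e.1.2 (prtD σ e.1.2) = e := by
      rw [(prtD_spec σ hcross he).2]
      exact (edgD_eq_iff d0 (Ne.symm hne12) e).mpr (Or.inr ⟨rfl, rfl⟩)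
    rw [hs1, hs2, ← Finsupp.single_add]
  set mσ2 : Diag n →₀ ℕ := ∑ e ∈ σ, Finsupp.single e 2 with hmσ2def
  have hmσval : ∀ u : Diag n, mσ2 u = if u ∈ σ then 2 else 0 := by
    intro u
    rw [hmσ2def]
    exact finsupp_sum_single_self_apply σ 2 u
  have hMonval : ∀ (π : Equiv.Perm (Fin (2 * r))) (u : Diag n),
      (∑ i, Finsupp.single (edgD d0 (jj (π i)) (jj i)) 1) u =
        (Finset.univ.filter (fun i => edgD d0 (jj (π i)) (jj i) = u)).card * 1 :=
    fun π u => finsupp_sum_single_apply _ _ 1 u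
  have hjne : ∀ (π : Equiv.Perm (Fin (2 * r))), (∀ i, π i ≠ i) →
      ∀ i, jj (π i) ≠ jj i := fun π hfpf i hh => hfpf i (hjinj hh)
  have huniq : ∀ π : Equiv.Perm (Fin (2 * r)), (∀ i, π i ≠ i) →
      (∑ i, Finsupp.single (edgD d0 (jj (π i)) (jj i)) 1) = mσ2 → π = π₀ := by
    intro π hfpf hMon
    refine Equiv.ext fun i => ?_
    have hEi : edgD d0 (jj (π i)) (jj i) ∈ σ := by
      by_contra hnm
      have h1 : (∑ i', Finsupp.single (edgD d0 (jj (π i')) (jj i')) 1)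
          (edgD d0 (jj (π i)) (jj i)) ≠ 0 := by
        rw [hMonval]
        have hmem : i ∈ Finset.univ.filter
            (fun i' => edgD d0 (jj (π i')) (jj i') = edgD d0 (jj (π i)) (jj i)) :=
          Finset.mem_filter.mpr ⟨Finset.mem_univ _, rfl⟩
        have := Finset.card_pos.mpr ⟨i, hmem⟩
        omega
      rw [hMon, hmσval, if_neg hnm] at h1
      exact h1 rfl
    rw [edgD_symm] at hEi
    have hpe := (edgD_mem_sigma d0 σ hcross (Ne.symm (hjne π hfpf i)) hEi).2
    apply hjinj
    rw [hπ₀app, hp0]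
    exact hpe.symm
  -- coefficient of the target monomial
  have hdet : (A.submatrix jj jj).det =
      ∑ π : Equiv.Perm (Fin (2 * r)),
        Equiv.Perm.sign π • ∏ i, (A.submatrix jj jj) (π i) i := Matrix.det_apply _
  have hcoeffother : ∀ π : Equiv.Perm (Fin (2 * r)), π ≠ π₀ →
      MvPolynomial.coeff mσ2 (Equiv.Perm.sign π • ∏ i, (A.submatrix jj jj) (π i) i) = 0 := by
    intro π hne
    by_cases hfpf : ∀ i, π i ≠ i
    · obtain ⟨ε', hε', heq⟩ := hterm π hfpf
      have hMne : (∑ i, Finsupp.single (edgD d0 (jj (π i)) (jj i)) 1) ≠ mσ2 :=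
        fun hh => hne (huniq π hfpf hh)
      rw [heq, MvPolynomial.coeff_smul, MvPolynomial.coeff_C_mul,
        MvPolynomial.coeff_monomial, if_neg hMne]
      simp
    · push_neg at hfpf
      obtain ⟨i, hi⟩ := hfpf
      rw [hfixzero π ⟨i, hi⟩, smul_zero, MvPolynomial.coeff_zero]
  have hcoeff : MvPolynomial.coeff mσ2 ((A.submatrix jj jj).det) ≠ 0 := by
    rw [hdet, MvPolynomial.coeff_sum]
    rw [Finset.sum_eq_single_of_mem π₀ (Finset.mem_univ _)
      (fun π _ hne => hcoeffother π hne)]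
    obtain ⟨ε0, hε0, heq⟩ := hterm π₀ hfpf0
    rw [heq, h0, MvPolynomial.coeff_smul, MvPolynomial.coeff_C_mul,
      MvPolynomial.coeff_monomial, if_pos rfl]
    rcases Int.units_eq_one_or (Equiv.Perm.sign π₀) with hs | hs <;>
      rcases hε0 with rfl | rfl <;>
      rw [hs] <;> norm_num
  -- every other monomial in the support is smaller
  refine ⟨MvPolynomial.mem_support_iff.mpr hcoeff, ?_⟩
  intro m hm hne
  have hcm : MvPolynomial.coeff m ((A.submatrix jj jj).det) ≠ 0 :=
    MvPolynomial.mem_support_iff.mp hm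
  rw [hdet, MvPolynomial.coeff_sum] at hcm
  obtain ⟨π, -, hπne⟩ := Finset.exists_ne_zero_of_sum_ne_zero hcm
  have hfpf : ∀ i, π i ≠ i := by
    by_contra hh
    push_neg at hh
    obtain ⟨i, hi⟩ := hh
    exact hπne (by rw [hfixzero π ⟨i, hi⟩, smul_zero, MvPolynomial.coeff_zero])
  obtain ⟨ε', hε', heq⟩ := hterm π hfpf
  have hMm : (∑ i, Finsupp.single (edgD d0 (jj (π i)) (jj i)) 1) = m := by
    by_contra hMm
    exact hπne (by rw [heq, MvPolynomial.coeff_smul, MvPolynomial.coeff_C_mul,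
      MvPolynomial.coeff_monomial, if_neg hMm]; simp)
  rw [← hMm] at hne ⊢
  set Mπ : Diag n →₀ ℕ := ∑ i, Finsupp.single (edgD d0 (jj (π i)) (jj i)) 1 with hMπdef
  -- degrees are equal
  have hdegM : (Mπ.sum fun _ e => e) = 2 * r := by
    rw [hMπdef, my_deg_finsetsum]
    rw [Finset.sum_congr rfl (fun i _ => my_deg_single _ 1)]
    simp
  have hdegT : (mσ2.sum fun _ e => e) = 2 * r := by
    rw [hmσ2def, my_deg_finsetsum]
    rw [Finset.sum_congr rfl (fun e _ => my_deg_single e 2)]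
    rw [Finset.sum_const, hcard, smul_eq_mul]
    omega
  refine Or.inr ⟨by rw [hdegM, hdegT], ?_⟩
  -- the vo-minimal difference
  set Dd : Finset (Diag n) := (Mπ.support ∪ mσ2.support).filter (fun v => Mπ v ≠ mσ2 v)
    with hDd
  have hDne : Dd.Nonempty := by
    rcases Finsupp.ne_iff.mp hne with ⟨v, hv⟩
    refine ⟨v, Finset.mem_filter.mpr ⟨?_, hv⟩⟩
    rcases em (Mπ v = 0) with h0' | h0'
    · exact Finset.mem_union_right _ (Finsupp.mem_support_iff.mpr (by omega))
    · exact Finset.mem_union_left _ (Finsupp.mem_support_iff.mpr h0')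
  obtain ⟨v, hvD, hvmin⟩ := exists_rel_min vo
    (fun a b hab => (@trichotomous_of _ vo hvo.toTrichotomous a b).elim Or.inl
      (fun h => h.elim (fun h => absurd h hab) Or.inr))
    (fun h h' => votrans vo hvo h h') Dd hDne
  have hagree : ∀ w, vo w v → Mπ w = mσ2 w := by
    intro w hw
    by_contra hnew
    have hwD : w ∈ Dd := by
      refine Finset.mem_filter.mpr ⟨?_, hnew⟩
      rcases em (Mπ w = 0) with h0' | h0'
      · exact Finset.mem_union_right _ (Finsupp.mem_support_iff.mpr (by omega))
      · exact Finset.mem_union_left _ (Finsupp.mem_support_iff.mpr h0')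
    have hwv : w ≠ v := fun hh => (hvo.irrefl v) (hh ▸ hw)
    exact (hvo.irrefl w) (votrans vo hvo hw (hvmin w hwD hwv))
  have hvdiff : Mπ v ≠ mσ2 v := (Finset.mem_filter.mp hvD).2
  have hvnot : v ∉ σ := by
    intro hvσ
    have hMv : Mπ v ≠ 2 := by
      rw [hmσval, if_pos hvσ] at hvdiff
      exact hvdiff
    -- π cannot swap the endpoints of v
    have hbswap : ∀ ia ib, (vertsD σ).orderEmbOfFin hV ia = v.1.1 →
        (vertsD σ).orderEmbOfFin hV ib = v.1.2 → ¬(π ia = ib ∧ π ib = ia) := by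
      rintro ia ib hia hib ⟨h1, h2⟩
      have hiaj : jj ia = v.1.1 := hia
      have hibj : jj ib = v.1.2 := hib
      apply hMv
      rw [hMπdef, hMonval]
      have hfe : Finset.univ.filter (fun i => edgD d0 (jj (π i)) (jj i) = v) = {ia, ib} := by
        ext i'
        simp only [Finset.mem_filter, Finset.mem_univ, true_and, Finset.mem_insert,
          Finset.mem_singleton]
        constructor
        · intro hEi
          rcases (edgD_eq_iff d0 (hjne π hfpf i') v).mp hEi with ⟨-, hh⟩ | ⟨-, hh⟩
          · right; exact hjinj (by rw [hibj, ← hh])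
          · left; exact hjinj (by rw [hiaj, ← hh])
        · rintro (rfl | rfl)
          · rw [h1, hibj, hiaj, edgD_symm]
            exact (edgD_eq_iff d0 (fun hh => (ne_of_lt v.2) hh) v).mpr (Or.inl ⟨rfl, rfl⟩)
          · rw [h2, hibj, hiaj]
            exact (edgD_eq_iff d0 (fun hh => (ne_of_lt v.2) hh) v).mpr (Or.inl ⟨rfl, rfl⟩)
      rw [hfe]
      have hiaib : ia ≠ ib := fun hh =>
        (ne_of_lt v.2) (by rw [← hiaj, ← hibj, hh])
      rw [Finset.card_insert_of_notMem (by simpa using hiaib), Finset.card_singleton]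
    obtain ⟨i', hnm, hlt⟩ := claimA d0 σ hcross hvσ hV π hfpf hbswap
    have hEval : Mπ (edgD d0 (jj (π i')) (jj i')) ≠ 0 := by
      rw [hMπdef, hMonval]
      have hmem : i' ∈ Finset.univ.filter
          (fun i'' => edgD d0 (jj (π i'')) (jj i'') = edgD d0 (jj (π i')) (jj i')) :=
        Finset.mem_filter.mpr ⟨Finset.mem_univ _, rfl⟩
      have := Finset.card_pos.mpr ⟨i', hmem⟩
      omega
    have hnmj : edgD d0 (jj (π i')) (jj i') ∉ σ := hnm
    have hED : edgD d0 (jj (π i')) (jj i') ∈ Dd := by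
      refine Finset.mem_filter.mpr ⟨Finset.mem_union_left _
        (Finsupp.mem_support_iff.mpr hEval), ?_⟩
      rw [hmσval, if_neg hnmj]
      exact fun hh => hEval hh
    have hvo1 : vo (edgD d0 (jj (π i')) (jj i')) v := hcompat _ _ hlt
    have hneqv : edgD d0 (jj (π i')) (jj i') ≠ v := fun hh => hnmj (hh ▸ hvσ)
    exact (hvo.irrefl _) (votrans vo hvo hvo1 (hvmin _ hED hneqv))
  refine ⟨v, ?_, hagree⟩
  rw [hmσval, if_neg hvnot]
  rw [hmσval, if_neg hvnot] at hvdiff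
  omega


/-- For each minimal nonface `σ` of `Δ_{n,r-1}` (a set of `r` pairwise crossing diagonals,
all of cyclic distance `> r - 1`), the monomial `∏_{(i,j) ∈ σ} x_{ij}` lies in the initial
ideal `in_≺(P_{n,r})` of the Pfaffian ideal with respect to the (degree) reverse
lexicographic order `≺` refining `x_{ij} ≺ x_{kl}` whenever `d_{ij} < d_{kl}`.
Consequently, the Stanley-Reisner ideal of the join `Δ_{n,r-1} * 2^{Θ_{n,r-1}}` is
contained in `in_≺(P_{n,r})`. -/
theorem stmt17 (k : Type) [Field k] (n r : ℕ) (hr : 1 ≤ r) (hrn : 2 * r ≤ n)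
    (vo : Diag n → Diag n → Prop) (hvo : IsStrictTotalOrder (Diag n) vo)
    (hcompat : ∀ e f : Diag n, dval n e < dval n f → vo e f)
    (A : Matrix (Fin n) (Fin n) (MvPolynomial (Diag n) k))
    (hA : ∀ i j : Fin n, A i j =
      if h : i < j then X ⟨(i, j), h⟩
      else if h' : j < i then - X ⟨(j, i), h'⟩
      else 0)
    (P : Ideal (MvPolynomial (Diag n) k))
    (hP : P = Ideal.span {p | ∃ j : Fin (2 * r) → Fin n, StrictMono j ∧
      p ^ 2 = (A.submatrix j j).det})
    (inP : Ideal (MvPolynomial (Diag n) k))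
    (hinP : inP = Ideal.span {g | ∃ f ∈ P, ∃ m : Diag n →₀ ℕ,
      IsLeadMon vo f m ∧ g = monomial m (1 : k)}) :
    (∀ σ : Finset (Diag n), σ.card = r → (∀ e ∈ σ, r - 1 < dval n e) →
      (σ : Set (Diag n)).Pairwise CrossD →
      monomial (∑ e ∈ σ, Finsupp.single e 1) (1 : k) ∈ inP) ∧
    Ideal.span {g : MvPolynomial (Diag n) k | ∃ s : Finset (Diag n),
        (∃ τ ⊆ s, τ.card = r ∧ (∀ e ∈ τ, r - 1 < dval n e) ∧
          (τ : Set (Diag n)).Pairwise CrossD) ∧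
        g = ∏ e ∈ s, X e} ≤ inP := by
  classical
  have hAskew : ∀ u v : Fin n, A v u = - A u v := by
    intro u v
    rcases lt_trichotomy u v with h | rfl | h
    · rw [hA v u, dif_neg (asymm h), dif_pos h, hA u v, dif_pos h]
    · rw [hA u u, dif_neg (lt_irrefl u), dif_neg (lt_irrefl u), neg_zero]
    · rw [hA v u, dif_pos h, hA u v, dif_neg (asymm h), dif_pos h, neg_neg]
  have hAdiag : ∀ u : Fin n, A u u = 0 := by
    intro u
    rw [hA u u, dif_neg (lt_irrefl u), dif_neg (lt_irrefl u)]
  have hmain : ∀ σ : Finset (Diag n), σ.card = r →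
      (σ : Set (Diag n)).Pairwise CrossD →
      monomial (∑ e ∈ σ, Finsupp.single e 1) (1 : k) ∈ inP := by
    intro σ hσcard hσcross
    obtain ⟨jj, hjmono, hlead⟩ := pfaff_lead k hr hrn vo hvo hcompat A hA σ hσcard hσcross
    obtain ⟨p, hp2⟩ := alt_det_sq_ufd (2 * r) (A.submatrix jj jj)
      (fun i j => hAskew (jj i) (jj j)) (fun i => hAdiag (jj i))
    have hdetne : (A.submatrix jj jj).det ≠ 0 := by
      intro h0'
      have := hlead.1
      rw [h0'] at this
      simp at this
    have hpne : p ≠ 0 := by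
      rintro rfl
      rw [← hp2] at hdetne
      simp at hdetne
    obtain ⟨mp, hmp⟩ := exists_leadMon vo hvo hpne
    have hmul := leadMon_mul vo hvo hmp hmp
    have hmul' : IsLeadMon vo ((A.submatrix jj jj).det) (mp + mp) := by
      rwa [← hp2, sq]
    have hsum2 : (∑ e ∈ σ, Finsupp.single e 2) =
        (∑ e ∈ σ, Finsupp.single e (1 : ℕ)) + ∑ e ∈ σ, Finsupp.single e (1 : ℕ) := by
      rw [← Finset.sum_add_distrib]
      refine Finset.sum_congr rfl fun e _ => ?_
      rw [← Finsupp.single_add]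
    have heqm : mp + mp = (∑ e ∈ σ, Finsupp.single e (1 : ℕ)) +
        ∑ e ∈ σ, Finsupp.single e (1 : ℕ) := by
      rw [← hsum2]
      exact leadMon_unique vo hvo hmul' hlead
    have hmp_eq : mp = ∑ e ∈ σ, Finsupp.single e (1 : ℕ) := by
      ext a
      have := congrArg (fun f : Diag n →₀ ℕ => f a) heqm
      simp only [Finsupp.add_apply] at this
      omega
    have hpP : p ∈ P := by
      rw [hP]
      exact Ideal.subset_span ⟨jj, hjmono, hp2⟩
    rw [hinP]
    exact Ideal.subset_span ⟨p, hpP, mp, hmp, by rw [hmp_eq]⟩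
  constructor
  · intro σ hσcard _ hσcross
    exact hmain σ hσcard hσcross
  · rw [Ideal.span_le]
    rintro g ⟨s, ⟨τ, hτs, hτcard, -, hτcross⟩, rfl⟩
    have h1 : monomial (∑ e ∈ τ, Finsupp.single e 1) (1 : k) ∈ inP :=
      hmain τ hτcard hτcross
    have h2 : (∏ e ∈ τ, (X e : MvPolynomial (Diag n) k)) =
        monomial (∑ e ∈ τ, Finsupp.single e 1) (1 : k) := prod_X_eq τ (fun e => e)
    have h3 : (∏ e ∈ s, (X e : MvPolynomial (Diag n) k)) =
        (∏ e ∈ s \ τ, (X e : MvPolynomial (Diag n) k)) * ∏ e ∈ τ, X e :=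
      (Finset.prod_sdiff hτs).symm
    rw [SetLike.mem_coe, h3, h2]
    exact Ideal.mul_mem_left _ _ h1
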